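/- Let α, β, γ, δ be complex constants and let U ⊆ ℂ be an open set not containing 0. Suppose x, y : ℂ → ℂ are differentiable on U and satisfy the Filipuk–Żołądek system x'(t) = x(t)² y(t)/t and y'(t) = α − x(t) y(t)²/t + β/x(t)² + γ t x(t) + δ t/x(t)³ for all t ∈ U, and that x(t) ≠ 0 on U. Then x satisfies the third Painlevé equation x''(t) = x'(t)²/x(t) − x'(t)/t + (α x(t)² + β)/t + γ x(t)³ + δ/x(t) on U, with the same parameters α, β, γ, δ. -/

import Mathlib

/-- Solutions of the Filipuk–Żołądek Hamiltonian system give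
solutions of the third Painlevé equation with the same parameters `α, β, γ, δ`. -/
theorem FZ_system_gives_PIII (α β γ δ : ℂ) (U : Set ℂ)
    (hU : IsOpen U) (hU0 : (0 : ℂ) ∉ U) (x y : ℂ → ℂ)
    (hx : ∀ t ∈ U, HasDerivAt x ((x t) ^ 2 * y t / t) t)
    (hy : ∀ t ∈ U, HasDerivAt y
      (α - x t * (y t) ^ 2 / t + β / (x t) ^ 2 + γ * t * x t + δ * t / (x t) ^ 3) t)
    (hxne : ∀ t ∈ U, x t ≠ 0) :
    ∀ t ∈ U, deriv (deriv x) t =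
      (deriv x t) ^ 2 / x t - deriv x t / t
        + (α * (x t) ^ 2 + β) / t + γ * (x t) ^ 3 + δ / x t := by
  intro t ht
  have htne : t ≠ 0 := fun h => hU0 (h ▸ ht)
  have hxt : x t ≠ 0 := hxne t ht
  have hdx : deriv x t = (x t) ^ 2 * y t / t := (hx t ht).deriv
  -- eventually deriv x = the formula
  have hev : deriv x =ᶠ[nhds t] fun s => (x s) ^ 2 * y s / s := by
    filter_upwards [hU.mem_nhds ht] with s hs
    exact (hx s hs).deriv
  -- derivative of the formula at t
  have hx' : HasDerivAt x ((x t) ^ 2 * y t / t) t := hx t ht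
  have hnum : HasDerivAt (fun s => (x s) ^ 2 * y s)
      ((2 * x t * ((x t) ^ 2 * y t / t)) * y t + (x t) ^ 2 *
        (α - x t * (y t) ^ 2 / t + β / (x t) ^ 2 + γ * t * x t + δ * t / (x t) ^ 3)) t := by
    have h1 : HasDerivAt (fun s => (x s) ^ 2) (2 * x t * ((x t) ^ 2 * y t / t)) t := by
      have := hx'.fun_pow 2
      simpa [mul_comm, mul_assoc, mul_left_comm] using this
    exact h1.mul (hy t ht)
  have hg : HasDerivAt (fun s => (x s) ^ 2 * y s / s)
      ((((2 * x t * ((x t) ^ 2 * y t / t)) * y t + (x t) ^ 2 *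
        (α - x t * (y t) ^ 2 / t + β / (x t) ^ 2 + γ * t * x t + δ * t / (x t) ^ 3)) * t
        - (x t) ^ 2 * y t * 1) / t ^ 2) t :=
    hnum.div (hasDerivAt_id t) htne
  have : deriv (deriv x) t = deriv (fun s => (x s) ^ 2 * y s / s) t := hev.deriv_eq
  rw [this, hg.deriv, hdx]
  field_simp
  ring_nf
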